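/- arXiv:2604.16112 — 2 statements merged into one kernel-verified Lean document; each statement's English description precedes it below -/
import Mathlib

section
/- Let Γ be a finite connected induced subgraph of the triangular grid, let R ⊆ V be a geodesically convex region of Γ, let q ∈ {x,y,z}, let P be a q-portal of the induced subgraph Γ|_R, and let C be a connected component of the subgraph of Γ induced on R∖P. Then C ∪ P is geodesically convex in Γ (i.e., splitting a geodesically convex region at a portal yields geodesically convex regions). -/
open SimpleGraph

/-- The infinite triangular grid graph on `ℤ × ℤ`. -/
def triGrid : SimpleGraph (ℤ × ℤ) where
  Adj u v := u - v = (1, 0) ∨ u - v = (-1, 0) ∨ u - v = (0, 1) ∨ u - v = (0, -1) ∨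
    u - v = (1, -1) ∨ u - v = (-1, 1)
  symm := by
    constructor
    intro u v h
    have hvu : v - u = -(u - v) := by ring
    rcases h with h | h | h | h | h | h <;> rw [hvu, h] <;> simp [Prod.ext_iff]
  loopless := by
    constructor
    intro u h
    simp [Prod.ext_iff] at h

/-- A finite set is hole-free (simple) if every connected component of the complement
is infinite, i.e., there are no inner holes. -/
def HoleFree (S : Set (ℤ × ℤ)) : Prop :=
  ∀ C : (triGrid.induce Sᶜ).ConnectedComponent, C.supp.Infinite

/-- The graph on `V` whose edges are the edges of the induced grid graph in direction `±e`. -/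
def portalLineGraph (V : Set (ℤ × ℤ)) (e : ℤ × ℤ) : SimpleGraph V where
  Adj u v := triGrid.Adj u v ∧ ((u : ℤ × ℤ) - v = e ∨ (v : ℤ × ℤ) - u = e)
  symm := ⟨fun u v ⟨h, h'⟩ => ⟨h.symm, h'.symm⟩⟩
  loopless := ⟨fun u ⟨h, _⟩ => triGrid.loopless.irrefl u h⟩

/-- The `e`-portals of the induced subgraph on `V`: connected components of `portalLineGraph`. -/
abbrev Portal (V : Set (ℤ × ℤ)) (e : ℤ × ℤ) := (portalLineGraph V e).ConnectedComponent

/-- The portal containing a given vertex. -/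
def portalMk (V : Set (ℤ × ℤ)) (e : ℤ × ℤ) (u : V) : Portal V e :=
  (portalLineGraph V e).connectedComponentMk u

/-- The `e`-portal graph: vertices are the `e`-portals, two portals being adjacent iff
some edge of the induced grid graph joins them. -/
def portalGraph (V : Set (ℤ × ℤ)) (e : ℤ × ℤ) : SimpleGraph (Portal V e) where
  Adj P Q := P ≠ Q ∧ ∃ u v : V, (triGrid.induce V).Adj u v ∧
    portalMk V e u = P ∧ portalMk V e v = Q
  symm := ⟨fun P Q ⟨hne, u, v, h, hu, hv⟩ => ⟨hne.symm, v, u, h.symm, hv, hu⟩⟩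
  loopless := ⟨fun P h => h.1 rfl⟩

/-- Distance between the portals of `u` and `v` in the `e`-portal graph. -/
noncomputable def portalDist (V : Set (ℤ × ℤ)) (e : ℤ × ℤ) (u v : V) : ℕ :=
  (portalGraph V e).dist (portalMk V e u) (portalMk V e v)

/-- A set `P` is an `e`-portal of the induced subgraph on `V` (as a set of grid points). -/
def IsPortal (V : Set (ℤ × ℤ)) (e : ℤ × ℤ) (P : Set (ℤ × ℤ)) : Prop :=
  ∃ C : Portal V e, P = Subtype.val '' C.supp

/-- `R` is geodesically convex in the subgraph induced on `V`: for all `u, v ∈ R`,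
every shortest `u`–`v` path in the induced graph stays inside `R`. -/
def GeodesicallyConvex (V R : Set (ℤ × ℤ)) : Prop :=
  ∀ u v : V, (u : ℤ × ℤ) ∈ R → (v : ℤ × ℤ) ∈ R →
    ∀ p : (triGrid.induce V).Walk u v, p.length = (triGrid.induce V).dist u v →
      ∀ w ∈ p.support, (w : ℤ × ℤ) ∈ R

def F2 (p : ℤ × ℤ) : ℕ := p.1.natAbs + p.2.natAbs + (p.1 + p.2).natAbs

def BtwZ (k j : ℤ) : Prop := (0 ≤ j ∧ j ≤ k) ∨ (k ≤ j ∧ j ≤ 0)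

lemma F2_step {s t : ℤ × ℤ} (r : ℤ × ℤ) (h : triGrid.Adj s t) :
    F2 (s - r) ≤ F2 (t - r) + 2 := by
  rcases h with h | h | h | h | h | h <;>
    (simp only [Prod.ext_iff, Prod.fst_sub, Prod.snd_sub] at h; obtain ⟨h1, h2⟩ := h;
     simp only [F2, Prod.fst_sub, Prod.snd_sub]; omega)

lemma F2_tri (x y : ℤ × ℤ) : F2 x ≤ F2 (x - y) + F2 y := by
  simp only [F2, Prod.fst_sub, Prod.snd_sub]; omega

lemma F2_neg (x y : ℤ × ℤ) : F2 (x - y) = F2 (y - x) := by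
  simp only [F2, Prod.fst_sub, Prod.snd_sub]; omega

lemma F2_walk {V : Set (ℤ × ℤ)} {u v : V} (p : (triGrid.induce V).Walk u v) :
    F2 ((u : ℤ × ℤ) - v) ≤ 2 * p.length := by
  induction p with
  | nil => simp [F2]
  | cons h p ih =>
    rename_i a b c
    have h' : triGrid.Adj (a : ℤ × ℤ) b := h
    calc F2 ((a : ℤ × ℤ) - c) ≤ F2 ((b : ℤ × ℤ) - c) + 2 := F2_step _ h'
    _ ≤ 2 * p.length + 2 := by omega
    _ = 2 * (Walk.cons h p).length := by simp [Walk.length_cons]; ring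

lemma portal_segment {R : Set (ℤ × ℤ)} {e : ℤ × ℤ} {a b : R}
    (q : (portalLineGraph R e).Walk a b) :
    ∃ k : ℤ, (b : ℤ × ℤ) = (a : ℤ × ℤ) + k • e ∧
      ∀ j : ℤ, BtwZ k j → (a : ℤ × ℤ) + j • e ∈ R := by
  induction q with
  | nil =>
    exact ⟨0, by simp, fun j hj => by
      have : j = 0 := by rcases hj with ⟨h1, h2⟩ | ⟨h1, h2⟩ <;> omega
      subst this; simpa using Subtype.mem _⟩
  | cons h q ih =>
    rename_i x y z
    obtain ⟨k', hk', hseg'⟩ := ih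
    obtain ⟨_, hd | hd⟩ := (h : triGrid.Adj (x : ℤ × ℤ) y ∧ ((x : ℤ × ℤ) - y = e ∨ (y : ℤ × ℤ) - x = e))
    · -- ↑x - ↑y = e  ⇒  ↑y = ↑x - e
      have hy : (y : ℤ × ℤ) = (x : ℤ × ℤ) - e := by
        have := hd; linear_combination (norm := module) -this
      refine ⟨k' - 1, by rw [hk', hy]; module, fun j hj => ?_⟩
      by_cases hj0 : j = 0
      · subst hj0; simpa using Subtype.mem x
      · have hb : BtwZ k' (j + 1) := by unfold BtwZ at *; omega
        have := hseg' (j + 1) hb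
        rw [hy] at this
        have heq : (x:ℤ×ℤ) + j • e = (x:ℤ×ℤ) - e + (j+1) • e := by module
        rw [heq]; exact this
    · -- ↑y - ↑x = e  ⇒  ↑y = ↑x + e
      have hy : (y : ℤ × ℤ) = (x : ℤ × ℤ) + e := by
        linear_combination (norm := module) hd
      refine ⟨k' + 1, by rw [hk', hy]; module, fun j hj => ?_⟩
      by_cases hj0 : j = 0
      · subst hj0; simpa using Subtype.mem x
      · have hb : BtwZ k' (j - 1) := by unfold BtwZ at *; omega
        have := hseg' (j - 1) hb
        rw [hy] at this
        have heq : (x:ℤ×ℤ) + j • e = (x:ℤ×ℤ) + e + (j-1) • e := by module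
        rw [heq]; exact this

lemma chain_reach {R : Set (ℤ × ℤ)} {e : ℤ × ℤ}
    (hAdjE : ∀ t : ℤ × ℤ, triGrid.Adj t (t + e)) (a : ℤ × ℤ) :
    ∀ j : ℤ, (∀ i : ℤ, BtwZ j i → a + i • e ∈ R) →
      ∀ (ha : a ∈ R) (hj : a + j • e ∈ R),
      (portalLineGraph R e).Reachable ⟨a, ha⟩ ⟨a + j • e, hj⟩ := by
  have adjE : ∀ (t : ℤ × ℤ) (ht : t ∈ R) (ht' : t + e ∈ R),
      (portalLineGraph R e).Adj ⟨t, ht⟩ ⟨t + e, ht'⟩ := by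
    intro t ht ht'
    show triGrid.Adj t (t + e) ∧ (t - (t + e) = e ∨ (t + e) - t = e)
    exact ⟨hAdjE t, Or.inr (add_sub_cancel_left t e)⟩
  intro j
  induction j using Int.induction_on with
  | zero =>
    intro _ ha hj
    have : (⟨a + (0:ℤ) • e, hj⟩ : R) = ⟨a, ha⟩ := Subtype.ext (by simp)
    rw [this]
  | succ i ih =>
    intro hseg ha hj
    have key : a + ((i : ℤ) + 1) • e = (a + (i : ℤ) • e) + e := by module
    have hi : a + (i : ℤ) • e ∈ R := hseg i (by unfold BtwZ; omega)
    have h1 := ih (fun i' hi' => hseg i' (by unfold BtwZ at *; omega)) ha hi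
    have h2 : (portalLineGraph R e).Adj ⟨a + (i:ℤ) • e, hi⟩ ⟨a + ((i:ℤ)+1) • e, hj⟩ := by
      have := adjE (a + (i:ℤ) • e) hi (key ▸ hj)
      convert this using 1
      exact Subtype.ext key
    exact h1.trans h2.reachable
  | pred i ih =>
    intro hseg ha hj
    have key : a + (-(i : ℤ) - 1) • e + e = a + (-(i : ℤ)) • e := by module
    have hi : a + (-(i : ℤ)) • e ∈ R := hseg (-(i:ℤ)) (by unfold BtwZ; omega)
    have h1 := ih (fun i' hi' => hseg i' (by unfold BtwZ at *; omega)) ha hi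
    have h2 : (portalLineGraph R e).Adj ⟨a + (-(i:ℤ)-1) • e, hj⟩ ⟨a + (-(i:ℤ)) • e, hi⟩ := by
      have := adjE (a + (-(i:ℤ)-1) • e) hj (key ▸ hi)
      convert this using 1
      exact Subtype.ext key.symm
    exact h1.trans h2.symm.reachable

lemma seg_dist {V : Set (ℤ × ℤ)} (hconn : (triGrid.induce V).Connected) {e : ℤ × ℤ}
    (hAdjE : ∀ t : ℤ × ℤ, triGrid.Adj t (t + e)) (a : ℤ × ℤ) :
    ∀ j : ℤ, (∀ i : ℤ, BtwZ j i → a + i • e ∈ V) → ∀ (ha : a ∈ V) (hj : a + j • e ∈ V),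
    (triGrid.induce V).dist ⟨a, ha⟩ ⟨a + j • e, hj⟩ ≤ j.natAbs := by
  intro j
  induction j using Int.induction_on with
  | zero =>
    intro _ ha hj
    have h0 : (⟨a + (0:ℤ) • e, hj⟩ : V) = ⟨a, ha⟩ := Subtype.ext (by simp)
    rw [h0]; simp
  | succ i ih =>
    intro hseg ha hj
    have key : a + ((i : ℤ) + 1) • e = (a + (i : ℤ) • e) + e := by module
    have hi : a + (i : ℤ) • e ∈ V := hseg i (by unfold BtwZ; omega)
    have h1 := ih (fun i' hi' => hseg i' (by unfold BtwZ at *; omega)) ha hi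
    have hadj : (triGrid.induce V).Adj ⟨a + (i:ℤ) • e, hi⟩ ⟨a + ((i:ℤ)+1) • e, hj⟩ := by
      show triGrid.Adj (a + (i:ℤ) • e) (a + ((i:ℤ)+1) • e)
      rw [key]; exact hAdjE _
    have h2 : (triGrid.induce V).dist ⟨a + (i:ℤ) • e, hi⟩ ⟨a + ((i:ℤ)+1) • e, hj⟩ ≤ 1 := by
      have := dist_le (Walk.cons hadj Walk.nil)
      simpa using this
    have h3 := hconn.dist_triangle (u := (⟨a, ha⟩ : V))
      (v := (⟨a + (i:ℤ) • e, hi⟩ : V)) (w := (⟨a + ((i:ℤ)+1) • e, hj⟩ : V))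
    have : ((i:ℤ)+1).natAbs = (i:ℤ).natAbs + 1 := by omega
    omega
  | pred i ih =>
    intro hseg ha hj
    have key : a + (-(i : ℤ) - 1) • e + e = a + (-(i : ℤ)) • e := by module
    have hi : a + (-(i : ℤ)) • e ∈ V := hseg (-(i:ℤ)) (by unfold BtwZ; omega)
    have h1 := ih (fun i' hi' => hseg i' (by unfold BtwZ at *; omega)) ha hi
    have hadj : (triGrid.induce V).Adj ⟨a + (-(i:ℤ)-1) • e, hj⟩ ⟨a + (-(i:ℤ)) • e, hi⟩ := by
      show triGrid.Adj (a + (-(i:ℤ)-1) • e) (a + (-(i:ℤ)) • e)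
      rw [← key]; exact hAdjE _
    have h2 : (triGrid.induce V).dist ⟨a + (-(i:ℤ)) • e, hi⟩ ⟨a + (-(i:ℤ)-1) • e, hj⟩ ≤ 1 := by
      have := dist_le (Walk.cons hadj.symm Walk.nil)
      simpa using this
    have h3 := hconn.dist_triangle (u := (⟨a, ha⟩ : V))
      (v := (⟨a + (-(i:ℤ)) • e, hi⟩ : V)) (w := (⟨a + (-(i:ℤ)-1) • e, hj⟩ : V))
    have : (-(i:ℤ)-1).natAbs = (-(i:ℤ)).natAbs + 1 := by omega
    omega

lemma cross_portal {V R P C : Set (ℤ × ℤ)}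
    {D : (triGrid.induce (R \ P)).ConnectedComponent} (hCD : C = Subtype.val '' D.supp) :
    ∀ {s t : V} (q : (triGrid.induce V).Walk s t),
      (∀ z ∈ q.support, (z : ℤ × ℤ) ∈ R) → (s : ℤ × ℤ) ∈ C ∪ P → (t : ℤ × ℤ) ∉ C ∪ P →
      ∃ a ∈ q.support, (a : ℤ × ℤ) ∈ P := by
  intro s t q
  induction q with
  | nil => intro _ hs ht; exact absurd hs ht
  | cons h q ih =>
    rename_i s x t
    intro hsup hs ht
    rcases hs with hsC | hsP
    · by_cases hxP : (x : ℤ × ℤ) ∈ P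
      · exact ⟨x, by simp, hxP⟩
      · have hxR : (x : ℤ × ℤ) ∈ R := hsup x (by simp)
        -- x is in the same component as s
        rw [hCD] at hsC
        obtain ⟨s', hs'D, hs'val⟩ := hsC
        have hadj : (triGrid.induce (R \ P)).Adj s' ⟨(x : ℤ × ℤ), ⟨hxR, hxP⟩⟩ := by
          show triGrid.Adj (s' : ℤ × ℤ) (x : ℤ × ℤ)
          rw [hs'val]; exact h
        have hxD : (⟨(x : ℤ × ℤ), ⟨hxR, hxP⟩⟩ : ↥(R \ P)) ∈ D.supp := by
          rw [ConnectedComponent.mem_supp_iff] at hs'D ⊢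
          rw [← hs'D]
          exact ConnectedComponent.sound hadj.symm.reachable
        have hxC : (x : ℤ × ℤ) ∈ C := by rw [hCD]; exact ⟨_, hxD, rfl⟩
        obtain ⟨a, haSup, haP⟩ := ih (fun z hz => hsup z (by simp [hz])) (Or.inl hxC) ht
        exact ⟨a, by simp [haSup], haP⟩
    · exact ⟨s, by simp, hsP⟩

lemma F2_rigid {V : Set (ℤ × ℤ)} {u v : V} (q : (triGrid.induce V).Walk u v)
    (h : 2 * q.length = F2 ((u : ℤ × ℤ) - v)) {w : V} (hw : w ∈ q.support) :
    F2 ((u : ℤ × ℤ) - w) + F2 ((w : ℤ × ℤ) - v) = F2 ((u : ℤ × ℤ) - v) := by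
  have h1 := F2_walk (q.takeUntil w hw)
  have h2 := F2_walk (q.dropUntil w hw)
  have hlen : (q.takeUntil w hw).length + (q.dropUntil w hw).length = q.length := by
    have := congrArg Walk.length (q.take_spec hw)
    rwa [Walk.length_append] at this
  have htri : F2 ((u : ℤ × ℤ) - v) ≤ F2 ((u : ℤ × ℤ) - w) + F2 ((w : ℤ × ℤ) - v) := by
    have := F2_tri ((u : ℤ × ℤ) - v) ((w : ℤ × ℤ) - v)
    have he : ((u : ℤ × ℤ) - v) - ((w : ℤ × ℤ) - v) = (u : ℤ × ℤ) - w := by ring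
    rwa [he] at this
  omega

lemma hF_x (k : ℤ) : F2 (k • ((1:ℤ),(0:ℤ))) = 2 * k.natAbs := by
  simp [Prod.smul_def, F2]; omega

lemma hrig_x (d : ℤ × ℤ) (k : ℤ)
    (h : F2 d + F2 (k • ((1:ℤ),(0:ℤ)) - d) = F2 (k • ((1:ℤ),(0:ℤ)))) :
    ∃ j, BtwZ k j ∧ d = j • ((1:ℤ),(0:ℤ)) := by
  obtain ⟨d1, d2⟩ := d
  refine ⟨d1, ?_, ?_⟩
  · simp [Prod.smul_def, F2, Prod.ext_iff, BtwZ] at h ⊢ <;> omega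
  · simp [Prod.smul_def, F2, Prod.ext_iff] at h ⊢ <;> omega

lemma hF_y (k : ℤ) : F2 (k • ((0:ℤ),(1:ℤ))) = 2 * k.natAbs := by
  simp [Prod.smul_def, F2]; omega

lemma hrig_y (d : ℤ × ℤ) (k : ℤ)
    (h : F2 d + F2 (k • ((0:ℤ),(1:ℤ)) - d) = F2 (k • ((0:ℤ),(1:ℤ)))) :
    ∃ j, BtwZ k j ∧ d = j • ((0:ℤ),(1:ℤ)) := by
  obtain ⟨d1, d2⟩ := d
  refine ⟨d2, ?_, ?_⟩
  · simp [Prod.smul_def, F2, Prod.ext_iff, BtwZ] at h ⊢ <;> omega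
  · simp [Prod.smul_def, F2, Prod.ext_iff] at h ⊢ <;> omega

lemma hF_z (k : ℤ) : F2 (k • ((1:ℤ),(-1:ℤ))) = 2 * k.natAbs := by
  simp [Prod.smul_def, F2]; omega

lemma hrig_z (d : ℤ × ℤ) (k : ℤ)
    (h : F2 d + F2 (k • ((1:ℤ),(-1:ℤ)) - d) = F2 (k • ((1:ℤ),(-1:ℤ)))) :
    ∃ j, BtwZ k j ∧ d = j • ((1:ℤ),(-1:ℤ)) := by
  obtain ⟨d1, d2⟩ := d
  refine ⟨d1, ?_, ?_⟩
  · simp [Prod.smul_def, F2, Prod.ext_iff, BtwZ] at h ⊢ <;> omega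
  · simp [Prod.smul_def, F2, Prod.ext_iff] at h ⊢ <;> omega


lemma main_core (V : Set (ℤ × ℤ)) (hconn : (triGrid.induce V).Connected)
    (R : Set (ℤ × ℤ)) (hRV : R ⊆ V)
    (hRconv : GeodesicallyConvex V R)
    (e : ℤ × ℤ)
    (hAdjE : ∀ t : ℤ × ℤ, triGrid.Adj t (t + e))
    (hF : ∀ k : ℤ, F2 (k • e) = 2 * k.natAbs)
    (hrig : ∀ (d : ℤ × ℤ) (k : ℤ), F2 d + F2 (k • e - d) = F2 (k • e) →
      ∃ j, BtwZ k j ∧ d = j • e)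
    (P : Set (ℤ × ℤ)) (hP : IsPortal R e P)
    (C : Set (ℤ × ℤ))
    (hC : ∃ D : (triGrid.induce (R \ P)).ConnectedComponent, C = Subtype.val '' D.supp) :
    GeodesicallyConvex V (C ∪ P) := by
  obtain ⟨Pc, hPc⟩ := hP
  obtain ⟨D, hCD⟩ := hC
  have hPR : P ⊆ R := by rw [hPc]; rintro _ ⟨r, _, rfl⟩; exact r.2
  have hCR : C ⊆ R := by rw [hCD]; rintro _ ⟨r, _, rfl⟩; exact r.2.1
  have hCPR : C ∪ P ⊆ R := Set.union_subset hCR hPR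
  intro u v hu hv p hlen w hwsup
  by_contra hwCP
  have hsupR : ∀ z ∈ p.support, (z : ℤ × ℤ) ∈ R :=
    hRconv u v (hCPR hu) (hCPR hv) p hlen
  have hwR : (w : ℤ × ℤ) ∈ R := hsupR w hwsup
  have hwP : (w : ℤ × ℤ) ∉ P := fun h => hwCP (Or.inr h)
  obtain ⟨a, haSup, haP⟩ := cross_portal hCD (p.takeUntil w hwsup)
    (fun z hz => hsupR z (Walk.support_takeUntil_subset _ _ hz)) hu hwCP
  obtain ⟨b, hbSup', hbP⟩ := cross_portal hCD (p.dropUntil w hwsup).reverse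
    (fun z hz => hsupR z (Walk.support_dropUntil_subset _ _
      (by rwa [Walk.support_reverse, List.mem_reverse] at hz))) hv hwCP
  have hbSup : b ∈ (p.dropUntil w hwsup).support := by
    rwa [Walk.support_reverse, List.mem_reverse] at hbSup'
  set p1 := p.takeUntil w hwsup with hp1
  set p2 := p.dropUntil w hwsup with hp2
  rw [hPc] at haP hbP
  obtain ⟨a', ha'supp, ha'val⟩ := haP
  obtain ⟨b', hb'supp, hb'val⟩ := hbP
  rw [ConnectedComponent.mem_supp_iff] at ha'supp hb'supp
  have hreach_ab : (portalLineGraph R e).Reachable a' b' :=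
    ConnectedComponent.exact (ha'supp.trans hb'supp.symm)
  obtain ⟨q0⟩ := hreach_ab
  obtain ⟨k, hk, hseg⟩ := portal_segment q0
  have hsegV : ∀ i : ℤ, BtwZ k i → (a' : ℤ × ℤ) + i • e ∈ V := fun i hi => hRV (hseg i hi)
  have hbval : (b : ℤ × ℤ) = (a' : ℤ × ℤ) + k • e := by rw [← hb'val, hk]
  have hkk : BtwZ k k := by unfold BtwZ; omega
  have ea : a = (⟨(a' : ℤ × ℤ), hRV a'.2⟩ : V) := Subtype.ext ha'val.symm
  have eb : b = (⟨(a' : ℤ × ℤ) + k • e, hRV (hseg k hkk)⟩ : V) := Subtype.ext hbval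
  have hdab : (triGrid.induce V).dist a b ≤ k.natAbs := by
    rw [ea, eb]; exact seg_dist hconn hAdjE _ k hsegV _ _
  set q1 := p1.dropUntil a haSup with hq1
  set q2 := p2.takeUntil b hbSup with hq2
  have hsplit1 : (p1.takeUntil a haSup).length + q1.length = p1.length := by
    have := congrArg Walk.length (p1.take_spec haSup)
    rwa [Walk.length_append] at this
  have hsplit2 : q2.length + (p2.dropUntil b hbSup).length = p2.length := by
    have := congrArg Walk.length (p2.take_spec hbSup)
    rwa [Walk.length_append] at this
  have hp12 : p1.length + p2.length = p.length := by
    have := congrArg Walk.length (p.take_spec hwsup)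
    rwa [Walk.length_append] at this
  have hdua := dist_le (p1.takeUntil a haSup)
  have hdbv := dist_le (p2.dropUntil b hbSup)
  have htri : (triGrid.induce V).dist u v ≤ (triGrid.induce V).dist u a +
      ((triGrid.induce V).dist a b + (triGrid.induce V).dist b v) := by
    have t1 := hconn.dist_triangle (u := u) (v := a) (w := v)
    have t2 := hconn.dist_triangle (u := a) (v := b) (w := v)
    omega
  have hlq : q1.length + q2.length ≤ k.natAbs := by omega
  set q := q1.append q2 with hqdef
  have hqlen : q.length = q1.length + q2.length := Walk.length_append _ _
  have habk : (a : ℤ × ℤ) - (b : ℤ × ℤ) = (-k) • e := by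
    rw [hbval, ← ha'val]; module
  have hFab : F2 ((a : ℤ × ℤ) - b) = 2 * k.natAbs := by
    rw [habk, hF]; omega
  have hlow := F2_walk q
  have h2q : 2 * q.length = F2 ((a : ℤ × ℤ) - b) := by omega
  have hwq : w ∈ q.support := by
    rw [Walk.mem_support_append_iff]; exact Or.inl (Walk.end_mem_support q1)
  have hr := F2_rigid q h2q hwq
  have hd : F2 ((w : ℤ × ℤ) - a) + F2 (k • e - ((w : ℤ × ℤ) - a)) = F2 (k • e) := by
    have e1 : F2 ((w : ℤ × ℤ) - a) = F2 ((a : ℤ × ℤ) - w) := F2_neg _ _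
    have e2 : k • e - ((w : ℤ × ℤ) - a) = (b : ℤ × ℤ) - w := by
      rw [hbval, ← ha'val]; module
    have e4 : F2 (k • e) = F2 ((a : ℤ × ℤ) - b) := by rw [hFab]; exact hF k
    have e3 : F2 ((b : ℤ × ℤ) - w) = F2 ((w : ℤ × ℤ) - b) := F2_neg _ _
    rw [e1, e2, e3, e4]
    exact hr
  obtain ⟨j, hbtw, hdj⟩ := hrig _ k hd
  have hwa : (w : ℤ × ℤ) = (a' : ℤ × ℤ) + j • e := by
    rw [ha'val]; linear_combination (norm := module) hdj
  have hsegj : ∀ i : ℤ, BtwZ j i → (a' : ℤ × ℤ) + i • e ∈ R := fun i hi =>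
    hseg i (by unfold BtwZ at *; omega)
  have hwR' : (a' : ℤ × ℤ) + j • e ∈ R := hwa ▸ hwR
  have hreach := chain_reach hAdjE (a' : ℤ × ℤ) j hsegj a'.2 hwR'
  have hmem : (a' : ℤ × ℤ) + j • e ∈ P := by
    rw [hPc]
    refine ⟨⟨_, hwR'⟩, ?_, rfl⟩
    rw [ConnectedComponent.mem_supp_iff, ← ha'supp]
    exact ConnectedComponent.sound hreach.symm
  exact hwP (hwa ▸ hmem)

/-- Splitting a geodesically convex region at a portal yields geodesically
convex regions: if `R ⊆ V` is a connected, geodesically convex region, `P` a `q`-portal of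
the subgraph induced on `R`, and `C` a connected component of the subgraph induced on
`R \ P`, then `C ∪ P` is geodesically convex in the subgraph induced on `V`. -/
theorem split_at_portal_convex (V : Set (ℤ × ℤ)) (hfin : V.Finite) (hne : V.Nonempty)
    (hconn : (triGrid.induce V).Connected)
    (R : Set (ℤ × ℤ)) (hRV : R ⊆ V) (hRconn : (triGrid.induce R).Connected)
    (hRconv : GeodesicallyConvex V R)
    (e : ℤ × ℤ) (he : e ∈ ({(1, 0), (0, 1), (1, -1)} : Set (ℤ × ℤ)))
    (P : Set (ℤ × ℤ)) (hP : IsPortal R e P)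
    (C : Set (ℤ × ℤ))
    (hC : ∃ D : (triGrid.induce (R \ P)).ConnectedComponent, C = Subtype.val '' D.supp) :
    GeodesicallyConvex V (C ∪ P) := by
  have he' : e = ((1:ℤ),(0:ℤ)) ∨ e = ((0:ℤ),(1:ℤ)) ∨ e = ((1:ℤ),(-1:ℤ)) := by
    simpa [Set.mem_insert_iff] using he
  rcases he' with rfl | rfl | rfl
  · exact main_core V hconn R hRV hRconv _
      (fun t => Or.inr (Or.inl (by simp [Prod.ext_iff])))
      hF_x hrig_x P hP C hC
  · exact main_core V hconn R hRV hRconv _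
      (fun t => Or.inr (Or.inr (Or.inr (Or.inl (by simp [Prod.ext_iff])))))
      hF_y hrig_y P hP C hC
  · exact main_core V hconn R hRV hRconv _
      (fun t => Or.inr (Or.inr (Or.inr (Or.inr (Or.inr (by simp [Prod.ext_iff]))))))
      hF_z hrig_z P hP C hC
end

section
/- There is a universal constant C such that the following holds. Let R ⊆ ℤ×ℤ be a finite set such that Γ_R = G_Δ|_R is connected and hole-free, and let 𝒬 be a set of k ≥ 1 y-portals of Γ_R (called gates). Then there exist m ≤ C·k subsets T_1,…,T_m ⊆ R with T_1 ∪ … ∪ T_m = R such that each T_j induces a connected subgraph of Γ_R, each T_j has no inner holes, and each T_j intersects at most two of the gates in 𝒬 (each T_j is a tunnel region). -/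
open SimpleGraph

lemma reach_transfer {V : Type*} {G : SimpleGraph V} {s : Set V} {G' : SimpleGraph s}
    (hG' : ∀ u v : s, G'.Adj u v → G.Adj u v) {t : Set V} :
    ∀ {a b : s} (p : G'.Walk a b), (∀ x ∈ p.support, (x : V) ∈ t) →
    ∀ {a' b' : t}, (a' : V) = a → (b' : V) = b → (G.induce t).Reachable a' b' := by
  intro a b p
  induction p with
  | nil =>
    intro hp a' b' ha hb
    have : a' = b' := Subtype.ext (by rw [ha, hb])
    exact this ▸ Reachable.refl a'
  | @cons u c b h q ih =>
    intro hp a' b' ha hb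
    have hc : (c : V) ∈ t := hp c (by simp [SimpleGraph.Walk.support_cons])
    have hadj : (G.induce t).Adj a' ⟨c, hc⟩ := by
      simp only [comap_adj, Function.Embedding.coe_subtype]
      rw [ha]
      exact hG' u c h
    exact (hadj.reachable).trans (ih (fun x hx => hp x (by simp [SimpleGraph.Walk.support_cons, hx])) rfl hb)

lemma reach_of_mem_support {V : Type*} {G : SimpleGraph V} :
    ∀ {a b : V} (p : G.Walk a b) (x : V), x ∈ p.support → G.Reachable a x := by
  intro a b p
  induction p with
  | nil => intro x hx; simp at hx; subst hx; exact Reachable.refl _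
  | @cons u c b h q ih =>
    intro x hx
    rw [SimpleGraph.Walk.support_cons, List.mem_cons] at hx
    rcases hx with rfl | hx
    · exact Reachable.refl x
    · exact (h.reachable).trans (ih x hx)

/-- Abstract covering lemma: a connected graph with a nonempty finite set of marks
can be covered by connected sets, one per mark, each containing marks only its own. -/
lemma cover_lemma {V : Type*} {G : SimpleGraph V} (hG : G.Connected) (M : Finset V)
    (hM : M.Nonempty) :
    ∃ A : ↥M → Set V, (∀ m, (m : V) ∈ A m) ∧ (∀ m, (G.induce (A m)).Connected) ∧
      (⋃ m, A m) = Set.univ ∧ (∀ m, A m ∩ ↑M ⊆ {(m : V)}) := by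
  classical
  set s : Set V := (↑M : Set V)ᶜ with hs
  set H : SimpleGraph s := G.induce s with hH
  -- every component of H has a vertex adjacent to a mark
  have key : ∀ D : H.ConnectedComponent, ∃ (mm : V) (u : s), mm ∈ M ∧
      H.connectedComponentMk u = D ∧ G.Adj u mm := by
    apply ConnectedComponent.ind
    intro x₀
    obtain ⟨m₀, hm₀⟩ := hM
    have hreach : G.Reachable (x₀ : V) m₀ := hG.preconnected _ _
    obtain ⟨p⟩ := hreach
    -- induction over walks ending in M, starting in s
    suffices h : ∀ (a b : V) (p : G.Walk a b), b ∈ M → ∀ ha : a ∈ s,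
        ∃ (mm : V) (u : s), mm ∈ M ∧ H.Reachable ⟨a, ha⟩ u ∧ G.Adj u mm by
      obtain ⟨mm, u, h1, h2, h3⟩ := h _ _ p hm₀ x₀.2
      exact ⟨mm, u, h1, (ConnectedComponent.sound h2.symm), h3⟩
    intro a b p
    induction p with
    | nil => intro hb ha; exact absurd hb ha
    | @cons u c b h q ih =>
      intro hb ha
      by_cases hc : c ∈ M
      · exact ⟨c, ⟨u, ha⟩, hc, Reachable.refl _, h⟩
      · obtain ⟨mm, w, h1, h2, h3⟩ := ih hb hc
        have hadj : H.Adj ⟨u, ha⟩ ⟨c, hc⟩ := by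
          simp only [hH, comap_adj, Function.Embedding.coe_subtype]
          exact h
        exact ⟨mm, w, h1, hadj.reachable.trans h2, h3⟩
  -- choice of mark for each component
  choose mk uu hmkM hmkcc hmkadj using key
  set g : s → V := fun x => mk (H.connectedComponentMk x) with hg
  have hgM : ∀ x : s, g x ∈ M := fun x => hmkM _
  refine ⟨fun m => {(m : V)} ∪ (Subtype.val '' { x : s | g x = (m : V) }), ?_, ?_, ?_, ?_⟩
  · intro m; exact Or.inl rfl
  · intro m
    show (G.induce ({(m : V)} ∪ (Subtype.val '' { x : s | g x = (m : V) }))).Connected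
    set Am : Set V := {(m : V)} ∪ (Subtype.val '' { x : s | g x = (m : V) }) with hAm
    have hmem : (m : V) ∈ Am := Or.inl rfl
    have hcore : ∀ x : Am, (G.induce Am).Reachable x ⟨(m : V), hmem⟩ := by
      rintro ⟨x, hx | ⟨y, hy, rfl⟩⟩
      · exact (Subtype.ext hx : (⟨x, _⟩ : Am) = ⟨(m:V), hmem⟩) ▸ Reachable.refl _
      · -- y : s with g y = m
        set D := H.connectedComponentMk y with hD
        have hgu : g (uu D) = (m : V) := by
          have : H.connectedComponentMk (uu D) = D := hmkcc D
          simp only [hg, this]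
          exact hy
        have hyu : H.Reachable y (uu D) := (ConnectedComponent.exact (by rw [hmkcc D]))
        obtain ⟨p⟩ := hyu
        have hsup : ∀ z ∈ p.support, (z : V) ∈ Am := by
          intro z hz
          have : H.connectedComponentMk z = D := by
            have := reach_of_mem_support p z hz
            exact (ConnectedComponent.sound this.symm)
          refine Or.inr ⟨z, ?_, rfl⟩
          simp only [Set.mem_setOf_eq, hg, this]
          exact hy
        have huAm : ((uu D : s) : V) ∈ Am := Or.inr ⟨uu D, hgu, rfl⟩
        have h1 : (G.induce Am).Reachable ⟨y, Or.inr ⟨y, hy, rfl⟩⟩ ⟨(uu D : s), huAm⟩ :=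
          reach_transfer (G' := H) (fun u v h => by
            simpa only [hH, comap_adj, Function.Embedding.coe_subtype] using h) p hsup rfl rfl
        have h2 : (G.induce Am).Adj ⟨(uu D : s), huAm⟩ ⟨(m : V), hmem⟩ := by
          simp only [comap_adj, Function.Embedding.coe_subtype]
          have hmD : mk D = (m : V) := by
            have h' : H.connectedComponentMk (uu D) = D := hmkcc D
            calc mk D = g (uu D) := by simp only [hg, h']
            _ = (m : V) := hgu
          exact hmD ▸ hmkadj D
        exact h1.trans h2.reachable
    haveI : Nonempty ↥Am := ⟨⟨(m : V), hmem⟩⟩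
    exact ⟨fun x y => (hcore x).trans (hcore y).symm⟩
  · ext x
    simp only [Set.mem_iUnion, Set.mem_univ, iff_true]
    by_cases hx : x ∈ M
    · exact ⟨⟨x, hx⟩, Or.inl rfl⟩
    · exact ⟨⟨g ⟨x, hx⟩, hgM ⟨x, hx⟩⟩, Or.inr ⟨⟨x, hx⟩, rfl, rfl⟩⟩
  · rintro m z ⟨hz1 | ⟨y, hy, rfl⟩, hz2⟩
    · exact hz1
    · exact absurd hz2 y.2


/-- the set of grid points belonging to a portal in `B` -/
def pieceSet (R : Set (ℤ × ℤ)) (B : Set (Portal R (0, 1))) : Set (ℤ × ℤ) :=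
  {z | ∃ h : z ∈ R, portalMk R (0, 1) ⟨z, h⟩ ∈ B}

lemma pieceSet_subset (R : Set (ℤ × ℤ)) (B : Set (Portal R (0, 1))) : pieceSet R B ⊆ R :=
  fun _ hz => hz.1

lemma portalGraph_connected {R : Set (ℤ × ℤ)} (hR : (triGrid.induce R).Connected) :
    (portalGraph R (0, 1)).Connected := by
  haveI : Nonempty ↥R := hR.nonempty
  haveI : Nonempty (Portal R (0, 1)) := ⟨portalMk R (0, 1) (Classical.arbitrary _)⟩
  refine ⟨?_⟩
  refine ConnectedComponent.ind₂ ?_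
  intro u v
  show (portalGraph R (0,1)).Reachable (portalMk R (0,1) u) (portalMk R (0,1) v)
  obtain ⟨p⟩ := hR.preconnected u v
  clear hR
  induction p with
  | nil => exact Reachable.refl _
  | @cons a c b h q ih =>
    refine Reachable.trans ?_ ih
    by_cases hac : portalMk R (0,1) a = portalMk R (0,1) c
    · exact hac ▸ Reachable.refl _
    · exact (Adj.reachable ⟨hac, a, c, h, rfl, rfl⟩)

lemma portalMk_mem_of_mem_piece {R : Set (ℤ × ℤ)} {B : Set (Portal R (0, 1))} {x : ↥R}
    (hxp : (x : ℤ × ℤ) ∈ pieceSet R B) : portalMk R (0, 1) x ∈ B := by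
  obtain ⟨h, hB⟩ := hxp
  convert hB using 2

lemma mem_piece_of_portalMk {R : Set (ℤ × ℤ)} {B : Set (Portal R (0, 1))} {x : ↥R}
    (h : portalMk R (0, 1) x ∈ B) : (x : ℤ × ℤ) ∈ pieceSet R B := by
  refine ⟨x.2, ?_⟩
  convert h using 2

lemma samePortal_reach {R : Set (ℤ × ℤ)} {B : Set (Portal R (0, 1))} {x y : ↥R}
    (hxy : portalMk R (0, 1) x = portalMk R (0, 1) y)
    (hxp : (x : ℤ × ℤ) ∈ pieceSet R B) (hyp : (y : ℤ × ℤ) ∈ pieceSet R B) :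
    (triGrid.induce (pieceSet R B)).Reachable ⟨x, hxp⟩ ⟨y, hyp⟩ := by
  have hBx : portalMk R (0, 1) x ∈ B := portalMk_mem_of_mem_piece hxp
  obtain ⟨p⟩ := ConnectedComponent.exact hxy
  refine reach_transfer (G' := portalLineGraph R (0, 1)) (fun u v h => h.1) p ?_ rfl rfl
  intro z hz
  have hzx : portalMk R (0, 1) x = portalMk R (0, 1) z :=
    ConnectedComponent.sound (reach_of_mem_support p z hz)
  exact mem_piece_of_portalMk (hzx ▸ hBx)

lemma piece_connected {R : Set (ℤ × ℤ)} {B : Set (Portal R (0, 1))}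
    (hB : ((portalGraph R (0, 1)).induce B).Connected) :
    (triGrid.induce (pieceSet R B)).Connected := by
  have hne : Nonempty ↥(pieceSet R B) := by
    obtain ⟨C⟩ := hB.nonempty
    obtain ⟨v, hv⟩ := (C : Portal R (0, 1)).exists_rep
    exact ⟨⟨v, mem_piece_of_portalMk (show portalMk R (0,1) v ∈ B by rw [show portalMk R (0,1) v = ↑C from hv]; exact C.2)⟩⟩
  haveI := hne
  refine ⟨?_⟩
  have key : ∀ {Pa Pb : ↥B} (q : ((portalGraph R (0, 1)).induce B).Walk Pa Pb)
      (x y : ↥R) (hx : portalMk R (0, 1) x = ↑Pa) (hy : portalMk R (0, 1) y = ↑Pb)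
      (hxp : (x : ℤ × ℤ) ∈ pieceSet R B) (hyp : (y : ℤ × ℤ) ∈ pieceSet R B),
      (triGrid.induce (pieceSet R B)).Reachable ⟨x, hxp⟩ ⟨y, hyp⟩ := by
    intro Pa Pb q
    induction q with
    | nil =>
      intro x y hx hy hxp hyp
      exact samePortal_reach (hx.trans hy.symm) hxp hyp
    | @cons Pa Pc Pb h q ih =>
      intro x y hx hy hxp hyp
      have h' : (portalGraph R (0, 1)).Adj ↑Pa ↑Pc := h
      obtain ⟨hne', u, v, huv, hu, hv⟩ := h'
      have hup : (u : ℤ × ℤ) ∈ pieceSet R B := mem_piece_of_portalMk (by rw [hu]; exact Pa.2)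
      have hvp : (v : ℤ × ℤ) ∈ pieceSet R B := mem_piece_of_portalMk (by rw [hv]; exact Pc.2)
      have r1 : (triGrid.induce (pieceSet R B)).Reachable ⟨x, hxp⟩ ⟨u, hup⟩ :=
        samePortal_reach (hx.trans hu.symm) hxp hup
      have r2 : (triGrid.induce (pieceSet R B)).Adj ⟨u, hup⟩ ⟨v, hvp⟩ := huv
      exact (r1.trans r2.reachable).trans (ih v y hv hy hvp hyp)
  intro x y
  have hxB : portalMk R (0, 1) ⟨x, x.2.1⟩ ∈ B := portalMk_mem_of_mem_piece (by exact x.2)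
  have hyB : portalMk R (0, 1) ⟨y, y.2.1⟩ ∈ B := portalMk_mem_of_mem_piece (by exact y.2)
  obtain ⟨q⟩ := hB.preconnected ⟨_, hxB⟩ ⟨_, hyB⟩
  exact key q ⟨x, x.2.1⟩ ⟨y, y.2.1⟩ rfl rfl x.2 y.2

lemma triGrid_adj_up (a b : ℤ) : triGrid.Adj (a, b) (a, b + 1) := by
  refine Or.inr (Or.inr (Or.inr (Or.inl ?_)))
  simp [Prod.ext_iff]

lemma portal_chain {R : Set (ℤ × ℤ)} {a b : ℤ} :
    ∀ (n : ℕ) (h : ∀ i : ℕ, i ≤ n → (a, b + (i : ℤ)) ∈ R),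
      portalMk R (0, 1) ⟨(a, b), by simpa using h 0 (Nat.zero_le n)⟩ =
      portalMk R (0, 1) ⟨(a, b + (n : ℤ)), h n le_rfl⟩ := by
  intro n
  induction n with
  | zero => intro h; congr 1; exact Subtype.ext (by simp)
  | succ n ih =>
    intro h
    have h' : ∀ i : ℕ, i ≤ n → (a, b + (i : ℤ)) ∈ R := fun i hi => h i (hi.trans (Nat.le_succ n))
    refine (ih h').trans ?_
    refine ConnectedComponent.sound ?_
    refine Adj.reachable ?_
    constructor
    · show triGrid.Adj (a, b + (n:ℤ)) (a, b + ((n+1:ℕ):ℤ))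
      have : (b + ((n+1:ℕ):ℤ)) = (b + (n:ℤ)) + 1 := by push_cast; ring
      rw [this]
      exact triGrid_adj_up a _
    · right
      show (a, b + ((n+1:ℕ):ℤ)) - (a, b + (n:ℤ)) = ((0:ℤ), (1:ℤ))
      simp only [Prod.mk_sub_mk, Prod.mk.injEq]
      refine ⟨by ring, by push_cast; ring⟩

lemma vert_reach {t : Set (ℤ × ℤ)} {a b : ℤ} :
    ∀ (n : ℕ) (h : ∀ i : ℕ, i ≤ n → (a, b + (i : ℤ)) ∈ t),
      (triGrid.induce t).Reachable ⟨(a, b), by simpa using h 0 (Nat.zero_le n)⟩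
        ⟨(a, b + (n : ℤ)), h n le_rfl⟩ := by
  intro n
  induction n with
  | zero =>
    intro h
    have he : (⟨(a, b), by simpa using h 0 (Nat.zero_le 0)⟩ : ↥t) =
        ⟨(a, b + ((0:ℕ) : ℤ)), h 0 le_rfl⟩ := Subtype.ext (by simp)
    rw [he]
  | succ n ih =>
    intro h
    have h' : ∀ i : ℕ, i ≤ n → (a, b + (i : ℤ)) ∈ t := fun i hi => h i (hi.trans (Nat.le_succ n))
    refine (ih h').trans ?_
    refine Adj.reachable ?_
    show triGrid.Adj (a, b + (n:ℤ)) (a, b + ((n+1:ℕ):ℤ))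
    have : (b + ((n+1:ℕ):ℤ)) = (b + (n:ℤ)) + 1 := by push_cast; ring
    rw [this]
    exact triGrid_adj_up a _

lemma piece_holeFree {R : Set (ℤ × ℤ)} (hRfin : R.Finite) (hHF : HoleFree R)
    (B : Set (Portal R (0, 1))) : HoleFree (pieceSet R B) := by
  classical
  intro D
  induction D using ConnectedComponent.ind with
  | _ x =>
  -- step 1 : reach a point outside R while staying outside the piece
  have incl : Rᶜ ⊆ (pieceSet R B)ᶜ := Set.compl_subset_compl.mpr (pieceSet_subset R B)
  have step1 : ∃ (y : ℤ × ℤ) (hy : y ∉ R) (hy' : y ∈ (pieceSet R B)ᶜ),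
      (triGrid.induce (pieceSet R B)ᶜ).Reachable x ⟨y, hy'⟩ := by
    by_cases hxR : (x : ℤ × ℤ) ∈ R
    · set a := (x : ℤ × ℤ).1 with ha
      set b := (x : ℤ × ℤ).2 with hb
      have hxe : (x : ℤ × ℤ) = (a, b) := rfl
      have hex : ∃ n : ℕ, (a, b + (n : ℤ)) ∉ R := by
        by_contra hcon
        push_neg at hcon
        refine hRfin.not_infinite ?_
        refine Set.infinite_of_injective_forall_mem (f := fun n : ℕ => (a, b + (n : ℤ))) ?_ hcon
        intro i j hij
        simp [Prod.ext_iff] at hij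
        exact_mod_cast hij
      set n₀ := Nat.find hex with hn₀def
      have hn₀ : (a, b + (n₀ : ℤ)) ∉ R := Nat.find_spec hex
      have hlt : ∀ i : ℕ, i < n₀ → (a, b + (i : ℤ)) ∈ R := by
        intro i hi
        exact not_not.mp (Nat.find_min hex hi)
      have hn₀pos : 0 < n₀ := by
        rcases Nat.eq_zero_or_pos n₀ with h0 | h
        · exfalso; apply hn₀; rw [h0]; simpa [hxe] using hxR
        · exact h
      have hBx : portalMk R (0, 1) ⟨(a, b), hxR⟩ ∉ B := by
        intro hc
        exact x.2 (mem_piece_of_portalMk (x := ⟨(a,b), hxR⟩) hc)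
      have hmem : ∀ i : ℕ, i ≤ n₀ → (a, b + (i : ℤ)) ∈ (pieceSet R B)ᶜ := by
        intro i hi
        rcases eq_or_lt_of_le hi with rfl | hi'
        · exact fun hc => hn₀ (pieceSet_subset R B hc)
        · intro hc
          have hiR : (a, b + (i : ℤ)) ∈ R := hlt i hi'
          have hchain := portal_chain (R := R) i (fun j hj => hlt j (lt_of_le_of_lt hj hi'))
          have : portalMk R (0, 1) ⟨(a, b + (i:ℤ)), hiR⟩ ∈ B := portalMk_mem_of_mem_piece hc
          rw [← hchain] at this
          exact hBx this
      refine ⟨(a, b + (n₀ : ℤ)), hn₀, hmem n₀ le_rfl, ?_⟩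
      exact vert_reach (t := (pieceSet R B)ᶜ) n₀ hmem
    · exact ⟨↑x, hxR, x.2, Reachable.refl x⟩
  obtain ⟨y, hy, hy', hreach⟩ := step1
  -- step 2 : the complement component of y in Rᶜ is infinite and sits inside D.supp
  have hEinf := hHF ((triGrid.induce Rᶜ).connectedComponentMk ⟨y, hy⟩)
  have hsub : Set.inclusion incl '' ((triGrid.induce Rᶜ).connectedComponentMk ⟨y, hy⟩).supp ⊆
      ((triGrid.induce (pieceSet R B)ᶜ).connectedComponentMk x).supp := by
    rintro w ⟨z, hz, rfl⟩
    rw [ConnectedComponent.mem_supp_iff] at hz ⊢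
    obtain ⟨p⟩ := ConnectedComponent.exact hz
    have hr2 : (triGrid.induce (pieceSet R B)ᶜ).Reachable ⟨z, incl z.2⟩ ⟨y, hy'⟩ :=
      reach_transfer (G' := triGrid.induce Rᶜ) (fun u v h => h) p
        (fun w _ => incl w.2) rfl rfl
    have : (triGrid.induce (pieceSet R B)ᶜ).Reachable (Set.inclusion incl z) x :=
      (hr2.trans hreach.symm)
    exact ConnectedComponent.sound this
  refine Set.Infinite.mono hsub ?_
  exact Set.Infinite.image (Set.injOn_of_injective (Set.inclusion_injective incl)) hEinf

theorem decomposition_into_tunnel_regions :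
    ∃ C : ℕ, ∀ (R : Set (ℤ × ℤ)), R.Finite → (triGrid.induce R).Connected → HoleFree R →
      ∀ (k : ℕ), 1 ≤ k → ∀ (Q : Finset (Set (ℤ × ℤ))), Q.card = k →
      (∀ P ∈ Q, IsPortal R (0, 1) P) →
      ∃ m : ℕ, m ≤ C * k ∧ ∃ T : Fin m → Set (ℤ × ℤ),
        (∀ j, T j ⊆ R) ∧ (⋃ j, T j) = R ∧
        ∀ j, (triGrid.induce (T j)).Connected ∧ HoleFree (T j) ∧
          {P | P ∈ Q ∧ (T j ∩ P).Nonempty}.ncard ≤ 2 := by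
  classical
  refine ⟨1, ?_⟩
  intro R hRfin hRconn hHF k hk Q hQcard hQportal
  -- choose the portal corresponding to each gate
  have hQp : ∀ P : ↥Q, ∃ C : Portal R (0, 1), (P : Set (ℤ × ℤ)) = Subtype.val '' C.supp :=
    fun P => hQportal P P.2
  choose pc hpc using hQp
  set M : Finset (Portal R (0, 1)) := Q.attach.image pc with hM
  have hMcard : M.card ≤ k := by
    calc M.card ≤ Q.attach.card := Finset.card_image_le
    _ = Q.card := Finset.card_attach
    _ = k := hQcard
  have hQne : Q.Nonempty := Finset.card_pos.mp (by omega)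
  have hMne : M.Nonempty := Finset.Nonempty.image (by simpa using hQne) pc
  obtain ⟨A, h1, h2, h3, h4⟩ := cover_lemma (portalGraph_connected hRconn) M hMne
  have ecard : Fintype.card ↥M = M.card := Fintype.card_coe M
  set e : ↥M ≃ Fin M.card := Fintype.equivFinOfCardEq ecard with he
  refine ⟨M.card, by simpa using hMcard, fun j => pieceSet R (A (e.symm j)), ?_, ?_, ?_⟩
  · intro j
    exact pieceSet_subset R _
  · apply Set.eq_of_subset_of_subset
    · exact Set.iUnion_subset fun j => pieceSet_subset R _
    · intro z hz
      have : portalMk R (0, 1) ⟨z, hz⟩ ∈ ⋃ mm, A mm := by rw [h3]; trivial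
      obtain ⟨mm, hmm⟩ := Set.mem_iUnion.mp this
      exact Set.mem_iUnion.mpr ⟨e mm, ⟨hz, by simpa using hmm⟩⟩
  · intro j
    refine ⟨piece_connected (h2 _), piece_holeFree hRfin hHF _, ?_⟩
    -- at most one gate meets the piece
    have hss : {P | P ∈ Q ∧ (pieceSet R (A (e.symm j)) ∩ P).Nonempty}.Subsingleton := by
      have key : ∀ P (hP : P ∈ Q), (pieceSet R (A (e.symm j)) ∩ P).Nonempty →
          pc ⟨P, hP⟩ = ↑(e.symm j) := by
        intro P hP ⟨z, hz1, hz2⟩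
        obtain ⟨hzR, hzB⟩ := hz1
        have hpcP : P = Subtype.val '' (pc ⟨P, hP⟩).supp := hpc ⟨P, hP⟩
        rw [hpcP] at hz2
        obtain ⟨w, hw, hwz⟩ := hz2
        have hwP : portalMk R (0, 1) w = pc ⟨P, hP⟩ := (ConnectedComponent.mem_supp_iff _ _).mp hw
        have hweq : w = ⟨z, hzR⟩ := Subtype.ext hwz
        have : pc ⟨P, hP⟩ ∈ A (e.symm j) ∩ ↑M := by
          constructor
          · rw [← hwP, hweq]; exact hzB
          · exact Finset.mem_coe.mpr (Finset.mem_image.mpr ⟨⟨P, hP⟩, Finset.mem_attach _ _, rfl⟩)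
        exact h4 _ this
      rintro P ⟨hP, hP2⟩ P' ⟨hP', hP'2⟩
      have : pc ⟨P, hP⟩ = pc ⟨P', hP'⟩ := (key P hP hP2).trans (key P' hP' hP'2).symm
      have hpcP : P = Subtype.val '' (pc ⟨P, hP⟩).supp := hpc ⟨P, hP⟩
      have hpcP' : P' = Subtype.val '' (pc ⟨P', hP'⟩).supp := hpc ⟨P', hP'⟩
      rw [hpcP, hpcP', this]
    rcases hss.eq_empty_or_singleton with hemp | ⟨a, hsing⟩
    · rw [hemp]; simp
    · rw [hsing]; simp
end
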